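/- Let f : ℝ^d → ℝ be locally Lipschitz and assume hypotheses (H4) and (H5) of the setting. Define C₁ := γ/4 and C₂ := min{γ/(8C_a), min{1, 1/δ_A}/2}. Then for every x ∈ ball(x̄, δ_A) and every σ ≥ 0 with max{dist(x, M), σ} ≤ C₂·‖P x − x̄‖, every g ∈ ∂_σ f(x) satisfies ‖Q_x g‖ ≥ C₁·‖P x − x̄‖. -/

import Mathlib

open Metric Set Filter
open scoped InnerProductSpace

abbrev Euc (d : ℕ) := EuclideanSpace ℝ (Fin d)

noncomputable def clarkeSubdiff {d : ℕ} (f : Euc d → ℝ) (x : Euc d) : Set (Euc d) :=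
  convexHull ℝ {v | ∃ u : ℕ → Euc d,
    (∀ n, DifferentiableAt ℝ f (u n)) ∧
    Tendsto u atTop (nhds x) ∧
    Tendsto (fun n => gradient f (u n)) atTop (nhds v)}

noncomputable def goldsteinSubdiff {d : ℕ} (f : Euc d → ℝ) (σ : ℝ) (x : Euc d) : Set (Euc d) :=
  convexHull ℝ (⋃ y ∈ closedBall x σ, clarkeSubdiff f y)

theorem stmt3 {d : ℕ}
    (f : Euc d → ℝ) (hf : LocallyLipschitz f)
    (xbar : Euc d) (M : Set (Euc d)) (hxbarM : xbar ∈ M)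
    (δA γ β Ca : ℝ)
    (hδA : 0 < δA) (hγ : 0 < γ) (hβ : 0 < β) (hCa : 0 < Ca)
    (P : Euc d → Euc d)
    (hP : ∀ z ∈ ball xbar (2*δA), P z ∈ M ∧ ‖z - P z‖ = Metric.infDist z M)
    (Tsp : Euc d → Submodule ℝ (Euc d)) (Q : Euc d → Euc d → Euc d)
    (hQ : ∀ x ∈ ball xbar δA, ∀ v, Q x v = ((Tsp x).orthogonalProjectionOnto v : Euc d))
    (G : Euc d → Euc d)
    (hG : ∀ x ∈ ball xbar δA, G x ∈ Tsp x)
    (H4 : ∀ x ∈ ball xbar δA, ∀ σ ∈ Icc (0:ℝ) δA, ∀ g ∈ goldsteinSubdiff f σ x,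
      ‖Q x (g - G x)‖ ≤ Ca * (Metric.infDist x M + σ))
    (H5 : ∀ x ∈ ball xbar δA, γ/2 * ‖P x - xbar‖ ≤ ‖G x‖ ∧ ‖G x‖ ≤ β * ‖P x - xbar‖)
    (C₁ C₂ : ℝ)
    (hC₁ : C₁ = γ/4)
    (hC₂ : C₂ = min (γ/(8*Ca)) (min 1 (1/δA) / 2))
    (x : Euc d) (hx : x ∈ ball xbar δA) (σ : ℝ) (hσ : 0 ≤ σ)
    (hcond : max (Metric.infDist x M) σ ≤ C₂ * ‖P x - xbar‖)
    (g : Euc d) (hg : g ∈ goldsteinSubdiff f σ x) :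
    C₁ * ‖P x - xbar‖ ≤ ‖Q x g‖ := by
  set r := ‖P x - xbar‖ with hr
  have hr0 : 0 ≤ r := norm_nonneg _
  have hx2 : x ∈ ball xbar (2*δA) := by
    have := mem_ball.mp hx
    exact mem_ball.mpr (by linarith)
  obtain ⟨hPxM, hPxdist⟩ := hP x hx2
  -- r ≤ 2 δA
  have hdistle : Metric.infDist x M ≤ ‖x - xbar‖ := by
    have := Metric.infDist_le_dist_of_mem (x := x) hxbarM
    simpa [dist_eq_norm] using this
  have hxnorm : ‖x - xbar‖ < δA := by
    have := mem_ball.mp hx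
    simpa [dist_eq_norm] using this
  have hr2 : r ≤ 2 * δA := by
    have h1 : r ≤ ‖P x - x‖ + ‖x - xbar‖ := norm_sub_le_norm_sub_add_norm_sub _ _ _
    have h2 : ‖P x - x‖ = Metric.infDist x M := by
      rw [norm_sub_rev]; exact hPxdist
    linarith
  have hC₂le1 : C₂ ≤ min 1 (1/δA) / 2 := hC₂ ▸ min_le_right _ _
  have hC₂le2 : C₂ ≤ γ/(8*Ca) := hC₂ ▸ min_le_left _ _
  have hmin : min 1 (1/δA) ≤ 1 := min_le_left _ _
  have hσδ : σ ≤ δA := by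
    have h1 : σ ≤ C₂ * r := le_trans (le_max_right _ _) hcond
    have h2 : C₂ * r ≤ (min 1 (1/δA) / 2) * (2*δA) := by
      have hC₂0 : 0 ≤ min 1 (1/δA) / 2 := by positivity
      nlinarith [mul_le_mul_of_nonneg_left hr2 hC₂0, mul_le_mul_of_nonneg_right hC₂le1 hr0]
    have h3 : (min 1 (1/δA) / 2) * (2*δA) ≤ δA := by
      have : min 1 (1/δA) * δA ≤ 1 * δA := mul_le_mul_of_nonneg_right hmin hδA.le
      nlinarith
    linarith
  have hH4 := H4 x hx σ ⟨hσ, hσδ⟩ g hg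
  have hdist : Metric.infDist x M ≤ C₂ * r := le_trans (le_max_left _ _) hcond
  have hσr : σ ≤ C₂ * r := le_trans (le_max_right _ _) hcond
  have hH5 := (H5 x hx).1
  -- Q x g = Q x (g - G x) + G x
  have hQG : Q x (G x) = G x := by
    rw [hQ x hx]
    exact Submodule.starProjection_eq_self_iff.mpr (hG x hx)
  have hsplit : Q x g = Q x (g - G x) + Q x (G x) := by
    rw [hQ x hx, hQ x hx, hQ x hx]
    push_cast [map_sub]
    abel
  have hlow : ‖G x‖ - ‖Q x (g - G x)‖ ≤ ‖Q x g‖ := by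
    have hGx : G x = Q x g - Q x (g - G x) := by rw [hsplit, hQG]; abel
    have := norm_sub_le (Q x g) (Q x (g - G x))
    rw [← hGx] at this
    linarith
  -- Ca * (dist + σ) ≤ γ/4 * r
  have hfinal : Ca * (Metric.infDist x M + σ) ≤ γ/4 * r := by
    have h1 : Metric.infDist x M + σ ≤ 2 * (C₂ * r) := by linarith
    have h2 : C₂ * r ≤ γ/(8*Ca) * r := mul_le_mul_of_nonneg_right hC₂le2 hr0
    have h3 : Ca * (Metric.infDist x M + σ) ≤ Ca * (2 * (γ/(8*Ca) * r)) := by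
      nlinarith
    have h4 : Ca * (2 * (γ/(8*Ca) * r)) = γ/4 * r := by
      field_simp; ring
    linarith
  rw [hC₁]
  linarith
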